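/- The gradient of Ψ(α) = ‖f_A(α) − g̃‖_2^2 (with the substitution α_{vu} = 1 − α_{uv}) is Lipschitz continuous with Lipschitz constant at most L = 4 max_u Σ_v (A_{uv} + A_{vu})^2. -/

import Mathlib

open scoped Classical

set_option maxHeartbeats 1000000

/-- The gradient of `Ψ(α) = ‖f_A(α) − g̃‖₂²` (with the substitution `α_{vu} = 1 − α_{uv}`, the
independent variables being `α_{uv}` for `u < v`) is Lipschitz continuous with constant at most
`L = 4 · max_u Σ_v (A_{uv} + A_{vu})²`. -/
theorem stmt_18 {n : ℕ} [Nonempty (Fin n)] (A : Fin n → Fin n → ℝ)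
    (hA : ∀ u v, 0 ≤ A u v) (gt : Fin n → ℝ) :
    let ext : EuclideanSpace ℝ {p : Fin n × Fin n // p.1 < p.2} → Fin n → Fin n → ℝ :=
      fun a u v =>
        if h : u < v then a ⟨(u, v), h⟩
        else if h : v < u then 1 - a ⟨(v, u), h⟩ else 1 / 2
    let Ψ : EuclideanSpace ℝ {p : Fin n × Fin n // p.1 < p.2} → ℝ :=
      fun a => ∑ u, ((∑ v, (A u v * ext a u v - A v u * ext a v u)) - gt u) ^ 2
    let L : ℝ := 4 * ⨆ u : Fin n, ∑ v, (A u v + A v u) ^ 2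
    ∀ a b, ‖gradient Ψ a - gradient Ψ b‖ ≤ L * ‖a - b‖ := by
  intro ext Ψ L a b
  classical
  set M : ℝ := ⨆ u : Fin n, ∑ v, (A u v + A v u) ^ 2 with hMdef
  have hMle : ∀ u : Fin n, (∑ v, (A u v + A v u) ^ 2) ≤ M := by
    intro u
    rw [hMdef]
    exact le_ciSup (f := fun u : Fin n => ∑ v, (A u v + A v u) ^ 2)
      (Set.Finite.bddAbove (Set.finite_range _)) u
  have hM0 : (0:ℝ) ≤ M := by
    obtain ⟨u₀⟩ := ‹Nonempty (Fin n)›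
    refine le_trans ?_ (hMle u₀)
    positivity
  -- the linear part of the affine map `a ↦ (F_u(a))_u`
  set tf : EuclideanSpace ℝ {p : Fin n × Fin n // p.1 < p.2} → EuclideanSpace ℝ (Fin n) :=
    fun x => WithLp.toLp 2 (fun u => ∑ v, (if h : u < v then (A u v + A v u) * x ⟨(u, v), h⟩
      else if h : v < u then -(A u v + A v u) * x ⟨(v, u), h⟩ else 0)) with htf
  have tf_add : ∀ x y, tf (x + y) = tf x + tf y := by
    intro x y
    ext u
    show (∑ v : Fin n, (_ : ℝ)) = (∑ v : Fin n, (_ : ℝ)) + (∑ v : Fin n, (_ : ℝ))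
    rw [← Finset.sum_add_distrib]
    refine Finset.sum_congr rfl fun v _ => ?_
    split_ifs <;> simp [PiLp.add_apply] <;> ring
  have tf_smul : ∀ (c : ℝ) x, tf (c • x) = c • tf x := by
    intro c x
    ext u
    show (∑ v : Fin n, _) = c • (∑ v : Fin n, (_ : ℝ))
    rw [Finset.smul_sum]
    refine Finset.sum_congr rfl fun v _ => ?_
    split_ifs <;> simp [PiLp.smul_apply, smul_eq_mul] <;> ring
  set T : EuclideanSpace ℝ {p : Fin n × Fin n // p.1 < p.2} →L[ℝ] EuclideanSpace ℝ (Fin n) :=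
    LinearMap.toContinuousLinearMap (IsLinearMap.mk' tf ⟨tf_add, tf_smul⟩) with hT
  have hTapp : ∀ x, T x = tf x := fun _ => rfl
  -- the constant part
  set w : EuclideanSpace ℝ (Fin n) := WithLp.toLp 2 (fun u =>
    (∑ v, (if u < v then -(A v u) else if v < u then A u v else 0)) - gt u) with hw
  -- `Ψ` as an inner product of an affine image with itself
  have hΨ : Ψ = fun y => (inner ℝ (T y + w) (T y + w) : ℝ) := by
    funext t
    have key : ∀ u, ((∑ v, (A u v * ext t u v - A v u * ext t v u)) - gt u) = (T t + w) u := by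
      intro u
      have : (T t + w) u = tf t u + w u := rfl
      rw [this, htf, hw]
      simp only [WithLp.ofLp_toLp]
      have : (∑ v, (A u v * ext t u v - A v u * ext t v u))
          = (∑ v, (if h : u < v then (A u v + A v u) * t ⟨(u, v), h⟩
              else if h : v < u then -(A u v + A v u) * t ⟨(v, u), h⟩ else 0))
            + ∑ v, (if u < v then -(A v u) else if v < u then A u v else 0) := by
        rw [← Finset.sum_add_distrib]
        refine Finset.sum_congr rfl fun v _ => ?_
        rcases lt_trichotomy u v with h | h | h
        · simp only [ext, dif_pos h, dif_neg (asymm h), if_pos h]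
          ring
        · subst h
          simp [lt_irrefl]
        · simp only [ext, dif_neg (asymm h), dif_pos h, if_neg (asymm h), if_pos h]
          ring
      rw [this]
      ring
    simp only [Ψ]
    rw [PiLp.inner_apply]
    refine Finset.sum_congr rfl fun u _ => ?_
    rw [key u]
    simp [RCLike.inner_apply, sq]
  -- the gradient of Ψ
  have hgrad : ∀ t, gradient Ψ t = (2:ℝ) • ((ContinuousLinearMap.adjoint T) (T t + w)) := by
    intro t
    apply HasGradientAt.gradient
    rw [hasGradientAt_iff_hasFDerivAt]
    have h1 : HasFDerivAt (fun y => T y + w) T t := T.hasFDerivAt.add_const w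
    have h2 := h1.inner ℝ h1
    rw [hΨ]
    convert h2 using 1
    · rfl
    refine ContinuousLinearMap.ext fun h => ?_
    simp only [InnerProductSpace.toDual_apply_apply, ContinuousLinearMap.comp_apply,
      ContinuousLinearMap.prod_apply, fderivInnerCLM_apply, real_inner_smul_left,
      ContinuousLinearMap.adjoint_inner_left]
    rw [real_inner_comm (T h) (T t + w)]
    ring
  -- the key operator-norm bound
  have hTle : ∀ x, ‖T x‖ ^ 2 ≤ (2 * M) * ‖x‖ ^ 2 := by
    intro x
    set X : Fin n × Fin n → ℝ := fun p =>
      if h : p.1 < p.2 then x ⟨p, h⟩ else if h : p.2 < p.1 then x ⟨(p.2, p.1), h⟩ else 0 with hX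
    have hnormT : ‖T x‖ ^ 2 = ∑ u, (tf x u) ^ 2 := by
      rw [hTapp, EuclideanSpace.norm_eq, Real.sq_sqrt (by positivity)]
      refine Finset.sum_congr rfl fun u _ => ?_
      rw [Real.norm_eq_abs, sq_abs]
    have hnormx : ‖x‖ ^ 2 = ∑ e, (x e) ^ 2 := by
      rw [EuclideanSpace.norm_eq, Real.sq_sqrt (by positivity)]
      refine Finset.sum_congr rfl fun e _ => ?_
      rw [Real.norm_eq_abs, sq_abs]
    -- rewrite rows using X
    have hrow : ∀ u, tf x u = ∑ v, (if u < v then (A u v + A v u)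
        else if v < u then -(A u v + A v u) else 0) * X (u, v) := by
      intro u
      rw [htf]
      simp only [WithLp.ofLp_toLp]
      refine Finset.sum_congr rfl fun v _ => ?_
      rcases lt_trichotomy u v with h | h | h
      · simp only [hX, dif_pos h, if_pos h]
      · subst h; simp [lt_irrefl]
      · simp only [hX, if_neg (asymm h), if_pos h, dif_neg (asymm h), dif_pos h]
    -- Cauchy–Schwarz on each row
    have hrowle : ∀ u, (tf x u) ^ 2 ≤ M * ∑ v, (X (u, v)) ^ 2 := by
      intro u
      rw [hrow u]
      refine le_trans (Finset.sum_mul_sq_le_sq_mul_sq _ _ _) ?_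
      refine mul_le_mul ?_ le_rfl (by positivity) hM0
      refine le_trans (Finset.sum_le_sum fun v _ => ?_) (hMle u)
      split_ifs with h1 h2
      · exact le_rfl
      · rw [neg_sq]
      · simpa using sq_nonneg (A u v + A v u)
    -- the double sum identity
    have hdouble : ∑ u, ∑ v, (X (u, v)) ^ 2 = 2 * ∑ e, (x e) ^ 2 := by
      have h1 : ∑ p : Fin n × Fin n, (X p) ^ 2 = ∑ u, ∑ v, (X (u, v)) ^ 2 :=
        Fintype.sum_prod_type _
      have hlt : ∑ p ∈ Finset.univ.filter (fun p : Fin n × Fin n => p.1 < p.2), (X p) ^ 2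
          = ∑ e : {p : Fin n × Fin n // p.1 < p.2}, (x e) ^ 2 := by
        rw [Finset.sum_subtype (p := fun p : Fin n × Fin n => p.1 < p.2)
          (Finset.univ.filter (fun p : Fin n × Fin n => p.1 < p.2))
          (fun p => by simp) (fun p => (X p) ^ 2)]
        refine Finset.sum_congr rfl fun e _ => ?_
        rw [hX]
        simp only [dif_pos e.2]
      have e1 : ∑ p ∈ Finset.univ.filter (fun p : Fin n × Fin n => p.2 < p.1), (X p) ^ 2
          = ∑ p ∈ Finset.univ.filter (fun p : Fin n × Fin n => ¬ p.1 < p.2), (X p) ^ 2 := by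
        refine Finset.sum_subset ?_ ?_
        · intro p hp
          simp only [Finset.mem_filter, Finset.mem_univ, true_and] at hp ⊢
          exact asymm hp
        · intro p hp hnp
          simp only [Finset.mem_filter, Finset.mem_univ, true_and] at hp hnp
          have hz : X p = 0 := by
            simp only [hX]
            rw [dif_neg hp, dif_neg hnp]
          rw [hz]
          ring
      have e2 : ∑ p ∈ Finset.univ.filter (fun p : Fin n × Fin n => p.2 < p.1), (X p) ^ 2
          = ∑ p ∈ Finset.univ.filter (fun p : Fin n × Fin n => p.1 < p.2), (X p) ^ 2 := by
        rw [Finset.sum_filter, Finset.sum_filter]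
        refine Fintype.sum_equiv (Equiv.prodComm (Fin n) (Fin n)) _ _ ?_
        rintro ⟨p1, p2⟩
        by_cases h : p2 < p1
        · simp [hX, h, asymm h]
        · simp [hX, h]
      have hgt : ∑ p ∈ Finset.univ.filter (fun p : Fin n × Fin n => ¬ p.1 < p.2), (X p) ^ 2
          = ∑ e : {p : Fin n × Fin n // p.1 < p.2}, (x e) ^ 2 := by
        rw [← e1, e2, hlt]
      rw [← h1, ← Finset.sum_filter_add_sum_filter_not Finset.univ
        (fun p : Fin n × Fin n => p.1 < p.2) (fun p => (X p) ^ 2), hlt, hgt]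
      ring
    calc ‖T x‖ ^ 2 = ∑ u, (tf x u) ^ 2 := hnormT
      _ ≤ ∑ u, M * ∑ v, (X (u, v)) ^ 2 := Finset.sum_le_sum fun u _ => hrowle u
      _ = M * ∑ u, ∑ v, (X (u, v)) ^ 2 := by rw [← Finset.mul_sum]
      _ = (2 * M) * ‖x‖ ^ 2 := by rw [hdouble, hnormx]; ring
  have hTnorm : ‖T‖ ≤ Real.sqrt (2 * M) := by
    refine T.opNorm_le_bound (Real.sqrt_nonneg _) fun x => ?_
    have h := hTle x
    calc ‖T x‖ = Real.sqrt (‖T x‖ ^ 2) := (Real.sqrt_sq (norm_nonneg _)).symm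
      _ ≤ Real.sqrt ((2 * M) * ‖x‖ ^ 2) := Real.sqrt_le_sqrt h
      _ = Real.sqrt (2 * M) * ‖x‖ := by
          rw [Real.sqrt_mul (by positivity), Real.sqrt_sq (norm_nonneg _)]
  -- conclusion
  have hdiff : gradient Ψ a - gradient Ψ b
      = (2:ℝ) • ((ContinuousLinearMap.adjoint T) (T (a - b))) := by
    rw [hgrad a, hgrad b, ← smul_sub, ← map_sub, add_sub_add_right_eq_sub, ← map_sub]
  rw [hdiff, norm_smul]
  have hadj : ‖(ContinuousLinearMap.adjoint T) (T (a - b))‖ ≤ ‖T‖ * ‖T (a - b)‖ := by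
    have : ‖ContinuousLinearMap.adjoint T‖ = ‖T‖ :=
      (ContinuousLinearMap.adjoint : _ ≃ₗᵢ⋆[ℝ] _).norm_map T
    calc ‖(ContinuousLinearMap.adjoint T) (T (a - b))‖
        ≤ ‖ContinuousLinearMap.adjoint T‖ * ‖T (a - b)‖ :=
          (ContinuousLinearMap.adjoint T).le_opNorm _
      _ = ‖T‖ * ‖T (a - b)‖ := by rw [this]
  have hTab : ‖T (a - b)‖ ≤ ‖T‖ * ‖a - b‖ := T.le_opNorm _
  have hsq : Real.sqrt (2 * M) * Real.sqrt (2 * M) = 2 * M :=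
    Real.mul_self_sqrt (by positivity)
  have hLdef : L = 4 * M := rfl
  rw [hLdef]
  have h2 : ‖(2:ℝ)‖ = 2 := by norm_num
  rw [h2]
  have c1 : ‖T (a - b)‖ ≤ Real.sqrt (2 * M) * ‖a - b‖ :=
    le_trans hTab (mul_le_mul_of_nonneg_right hTnorm (norm_nonneg _))
  have c3 : ‖(ContinuousLinearMap.adjoint T) (T (a - b))‖ ≤ 2 * M * ‖a - b‖ := by
    calc ‖(ContinuousLinearMap.adjoint T) (T (a - b))‖ ≤ ‖T‖ * ‖T (a - b)‖ := hadj
      _ ≤ Real.sqrt (2 * M) * (Real.sqrt (2 * M) * ‖a - b‖) :=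
          mul_le_mul hTnorm c1 (norm_nonneg _) (Real.sqrt_nonneg _)
      _ = (Real.sqrt (2 * M) * Real.sqrt (2 * M)) * ‖a - b‖ := by ring
      _ = 2 * M * ‖a - b‖ := by rw [hsq]
  linarith
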